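/- If ξ(X,Y) = 1, then Y is almost surely equal to a σ(X)-measurable random variable. -/

import Mathlib

open MeasureTheory ProbabilityTheory

section CvmAux

lemma cvm_bad_null (ν : Measure ℝ) :
    ν {y | ν {y} = 0 ∧ ∃ q, y < q ∧ ν (Set.Ioo y q) = 0} = 0 := by
  have key : ∀ q : ℚ, ν {y | ν {y} = 0 ∧ y < (q : ℝ) ∧ ν (Set.Ioo y (q : ℝ)) = 0} = 0 := by
    intro q
    set W := {y | ν {y} = 0 ∧ y < (q : ℝ) ∧ ν (Set.Ioo y (q : ℝ)) = 0} with hW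
    have hIco : ∀ y ∈ W, ν (Set.Ico y (q : ℝ)) = 0 := by
      intro y hy
      have hsub : Set.Ico y (q : ℝ) ⊆ {y} ∪ Set.Ioo y (q : ℝ) := by
        intro x hx
        rcases eq_or_lt_of_le hx.1 with h | h
        · exact Or.inl (by simp [← h])
        · exact Or.inr ⟨h, hx.2⟩
      exact measure_mono_null hsub (measure_union_null hy.1 hy.2.2)
    rcases Set.eq_empty_or_nonempty W with hWe | hWne
    · simp [hWe]
    by_cases hbdd : BddBelow W
    · set ι := sInf W with hι
      have hsub : W ⊆ (W ∩ {ι}) ∪ ⋃ n : ℕ, Set.Ico (ι + 1 / (n + 1)) (q : ℝ) := by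
        intro y hy
        rcases eq_or_lt_of_le (csInf_le hbdd hy) with h | h
        · exact Or.inl ⟨hy, by simp [← h, hι]⟩
        · obtain ⟨n, hn⟩ := exists_nat_one_div_lt (sub_pos.mpr h)
          exact Or.inr (Set.mem_iUnion.mpr ⟨n, by constructor <;> [linarith; exact hy.2.1]⟩)
      refine measure_mono_null hsub (measure_union_null ?_ (measure_iUnion_null fun n => ?_))
      · by_cases hιW : ι ∈ W
        · exact measure_mono_null (fun x hx => hx.2) hιW.1
        · have : W ∩ {ι} = ∅ := by
            ext x; simp only [Set.mem_inter_iff, Set.mem_singleton_iff, Set.mem_empty_iff_false,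
              iff_false, not_and]
            rintro hx rfl; exact hιW hx
          simp [this]
      · have hpos : (0 : ℝ) < 1 / (n + 1) := by positivity
        obtain ⟨y, hyW, hylt⟩ := (csInf_lt_iff hbdd hWne).mp (lt_add_of_pos_right ι hpos)
        exact measure_mono_null (Set.Ico_subset_Ico hylt.le le_rfl) (hIco y hyW)
    · have hsub : W ⊆ ⋃ n : ℕ, Set.Ico (-(n : ℝ)) (q : ℝ) := by
        intro y hy
        obtain ⟨n, hn⟩ := exists_nat_ge (-y)
        exact Set.mem_iUnion.mpr ⟨n, by constructor <;> [linarith; exact hy.2.1]⟩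
      refine measure_mono_null hsub (measure_iUnion_null fun n => ?_)
      obtain ⟨y, hyW, hylt⟩ := not_bddBelow_iff.mp hbdd (-(n : ℝ))
      exact measure_mono_null (Set.Ico_subset_Ico hylt.le le_rfl) (hIco y hyW)
  have hsub : {y | ν {y} = 0 ∧ ∃ q, y < q ∧ ν (Set.Ioo y q) = 0} ⊆
      ⋃ q : ℚ, {y | ν {y} = 0 ∧ y < (q : ℝ) ∧ ν (Set.Ioo y (q : ℝ)) = 0} := by
    rintro y ⟨hy0, q', hq', hq'0⟩
    obtain ⟨q, hq1, hq2⟩ := exists_rat_btwn hq'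
    exact Set.mem_iUnion.mpr ⟨q, hy0, hq1,
      measure_mono_null (Set.Ioo_subset_Ioo le_rfl hq2.le) hq'0⟩
  exact measure_mono_null hsub (measure_iUnion_null key)

lemma cvm_condexp_bound {Ω : Type*} (m' : MeasurableSpace Ω) {m0 : MeasurableSpace Ω}
    (μ : Measure Ω) [IsProbabilityMeasure μ] (hm' : m' ≤ m0) {f : Ω → ℝ} (hfi : Integrable f μ)
    (hbd : ∀ ω, ‖f ω‖ ≤ 1) :
    ∀ᵐ ω ∂μ, ‖(μ[f|m']) ω‖ ≤ 1 := by
  haveI : SigmaFinite (μ.trim hm') := inferInstance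
  have h1 : μ[f|m'] ≤ᵐ[μ] μ[(fun _ => (1:ℝ))|m'] :=
    condExp_mono hfi (integrable_const 1) (ae_of_all _ fun ω => (abs_le.mp (hbd ω)).2)
  have h2 : μ[(fun _ => (-1:ℝ))|m'] ≤ᵐ[μ] μ[f|m'] :=
    condExp_mono (integrable_const (-1)) hfi (ae_of_all _ fun ω => (abs_le.mp (hbd ω)).1)
  rw [condExp_const hm'] at h1
  rw [condExp_const hm'] at h2
  filter_upwards [h1, h2] with ω hω1 hω2
  rw [Real.norm_eq_abs, abs_le]
  exact ⟨hω2, hω1⟩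

lemma cvm_var_condexp_sub {Ω : Type*} (m' : MeasurableSpace Ω) {m0 : MeasurableSpace Ω}
    (μ : Measure Ω) [IsProbabilityMeasure μ] (hm' : m' ≤ m0) (f : Ω → ℝ) (hf : Measurable f)
    (hbd : ∀ ω, ‖f ω‖ ≤ 1) :
    variance f μ - variance (μ[f|m']) μ = ∫ ω, (f ω - (μ[f|m']) ω) ^ 2 ∂μ := by
  haveI : SigmaFinite (μ.trim hm') := inferInstance
  set g : Ω → ℝ := μ[f|m'] with hgdef
  have hfsm : AEStronglyMeasurable f μ := hf.aestronglyMeasurable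
  have hf2 : MemLp f 2 μ := MemLp.of_bound hfsm 1 (ae_of_all _ hbd)
  have hfi : Integrable f μ := hf2.integrable one_le_two
  have hgsm : StronglyMeasurable[m'] g := stronglyMeasurable_condExp
  have hgm : AEStronglyMeasurable g μ := (hgsm.mono hm').aestronglyMeasurable
  have hgbd : ∀ᵐ ω ∂μ, ‖g ω‖ ≤ 1 := cvm_condexp_bound m' μ hm' hfi hbd
  have hg2 : MemLp g 2 μ := MemLp.of_bound hgm 1 hgbd
  have hgi : Integrable g μ := integrable_condExp
  have hgf : Integrable (fun ω => g ω * f ω) μ := hfi.bdd_mul hgm hgbd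
  have hgg : Integrable (fun ω => g ω * g ω) μ := hgi.bdd_mul hgm hgbd
  have hff : Integrable (fun ω => f ω * f ω) μ := hfi.bdd_mul hfsm (ae_of_all _ hbd)
  have hpull : μ[(fun ω => g ω * f ω)|m'] =ᵐ[μ] fun ω => g ω * g ω := by
    have := condExp_mul_of_stronglyMeasurable_left (μ := μ) hgsm (by simpa [Pi.mul_def] using hgf) hfi
    simpa [Pi.mul_def] using this
  have hkey : ∫ ω, g ω * f ω ∂μ = ∫ ω, g ω * g ω ∂μ := by
    rw [← integral_condExp hm' (f := fun ω => g ω * f ω)]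
    exact integral_congr_ae hpull
  have hmean : ∫ ω, g ω ∂μ = ∫ ω, f ω ∂μ := integral_condExp hm'
  have e1 : ∫ ω, (f ω * f ω - 2 * (g ω * f ω) + g ω * g ω) ∂μ
      = ∫ ω, (f ω * f ω - 2 * (g ω * f ω)) ∂μ + ∫ ω, g ω * g ω ∂μ :=
    integral_add (hff.sub (hgf.const_mul 2)) hgg
  have e2 : ∫ ω, (f ω * f ω - 2 * (g ω * f ω)) ∂μ
      = ∫ ω, f ω * f ω ∂μ - ∫ ω, (2 * (g ω * f ω)) ∂μ :=
    integral_sub hff (hgf.const_mul 2)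
  have e3 : ∫ ω, (2 * (g ω * f ω)) ∂μ = 2 * ∫ ω, g ω * f ω ∂μ :=
    integral_const_mul 2 _
  have hexp : ∫ ω, (f ω - g ω) ^ 2 ∂μ
      = ∫ ω, f ω * f ω ∂μ - 2 * ∫ ω, g ω * f ω ∂μ + ∫ ω, g ω * g ω ∂μ := by
    have h : (fun ω => (f ω - g ω) ^ 2)
        = fun ω => f ω * f ω - 2 * (g ω * f ω) + g ω * g ω := by
      funext ω; ring
    rw [h]
    rw [e1, e2, e3]
  have hvf : variance f μ = ∫ ω, f ω * f ω ∂μ - (∫ ω, f ω ∂μ) ^ 2 := by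
    rw [variance_eq_sub hf2]; congr 1; simp [pow_two]
  have hvg : variance g μ = ∫ ω, g ω * g ω ∂μ - (∫ ω, g ω ∂μ) ^ 2 := by
    rw [variance_eq_sub hg2]; congr 1; simp [pow_two]
  rw [hvf, hvg, hexp, hkey, hmean]
  ring

theorem cvm_exists_meas_of_ae_indicator {Ω : Type*} (m' : MeasurableSpace Ω)
    {m0 : MeasurableSpace Ω} (μ : Measure Ω) [IsProbabilityMeasure μ]
    (Y : Ω → ℝ) (hY : Measurable Y) (g : ℝ → Ω → ℝ)
    (hgm : ∀ t, StronglyMeasurable[m'] (g t))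
    (hae : ∀ᵐ t ∂(μ.map Y), (fun ω => if Y ω ≤ t then (1:ℝ) else 0) =ᵐ[μ] g t) :
    ∃ Z : Ω → ℝ, Measurable[m'] Z ∧ Y =ᵐ[μ] Z := by
  set ν := μ.map Y with hν
  haveI : IsProbabilityMeasure ν := Measure.isProbabilityMeasure_map hY.aemeasurable
  have h1 : ν {t | ¬ (fun ω => if Y ω ≤ t then (1:ℝ) else 0) =ᵐ[μ] g t} = 0 := hae
  obtain ⟨N, hNsub, hNm, hNnull⟩ := exists_measurable_superset_of_null h1
  have hGood : ∀ t ∉ N, (fun ω => if Y ω ≤ t then (1:ℝ) else 0) =ᵐ[μ] g t :=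
    fun t ht => not_not.mp fun hc => ht (hNsub hc)
  -- atoms
  have hAc : {t : ℝ | ν {t} ≠ 0}.Countable := by
    have h := MeasureTheory.Measure.countable_meas_level_set_pos
      (μ := ν) (measurable_id (α := ℝ))
    refine Set.Countable.mono ?_ h
    intro t ht
    simp only [Set.mem_setOf_eq, id] at *
    rw [show {a : ℝ | a = t} = {t} from Set.setOf_eq_eq_singleton]
    exact pos_iff_ne_zero.mpr ht
  have hAN : ∀ a ∈ {t : ℝ | ν {t} ≠ 0}, a ∈ (Nᶜ : Set ℝ) := by
    intro a ha haN
    exact ha (measure_mono_null (Set.singleton_subset_iff.mpr haN) hNnull)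
  -- countable dense subset of Nᶜ
  obtain ⟨D₀, hD₀G, hD₀c, hGD₀⟩ :=
    (TopologicalSpace.IsSeparable.of_separableSpace (Nᶜ : Set ℝ)).exists_countable_dense_subset
  have hNc_ne : (Nᶜ : Set ℝ).Nonempty := by
    by_contra h
    rw [Set.not_nonempty_iff_eq_empty, Set.compl_empty_iff] at h
    rw [h] at hNnull
    simp at hNnull
  have hD₀ne : D₀.Nonempty := by
    obtain ⟨t, ht⟩ := hNc_ne
    exact closure_nonempty_iff.mp ⟨t, hGD₀ ht⟩
  obtain ⟨u, hu⟩ := Set.Countable.exists_eq_range (hD₀c.union hAc)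
    (hD₀ne.mono Set.subset_union_left)
  have huN : ∀ n, u n ∈ (Nᶜ : Set ℝ) := by
    intro n
    have : u n ∈ D₀ ∪ {t : ℝ | ν {t} ≠ 0} := hu ▸ Set.mem_range_self n
    rcases this with h | h
    · exact hD₀G h
    · exact hAN _ h
  -- the candidate
  set Z0 : Ω → EReal := fun ω => ⨅ n, if (1:ℝ)/2 ≤ g (u n) ω then ((u n : ℝ) : EReal) else ⊤
    with hZ0
  have hZ0m : Measurable[m'] Z0 := by
    refine Measurable.iInf fun n => Measurable.ite ?_ measurable_const measurable_const
    exact measurableSet_le measurable_const (hgm (u n)).measurable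
  refine ⟨fun ω => (Z0 ω).toReal, measurable_ereal_toReal.comp hZ0m, ?_⟩
  -- a.e. facts
  have hgood : ∀ᵐ ω ∂μ, ∀ n, (if Y ω ≤ u n then (1:ℝ) else 0) = g (u n) ω := by
    rw [ae_all_iff]
    intro n
    exact hGood (u n) (huN n)
  obtain ⟨M, hBM, hMm, hMnull⟩ := exists_measurable_superset_of_null (cvm_bad_null ν)
  have hYM : ∀ᵐ ω ∂μ, Y ω ∉ M := by
    have h : μ (Y ⁻¹' M) = 0 := by rw [← Measure.map_apply hY hMm]; exact hMnull
    rw [ae_iff]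
    simp only [not_not]
    exact h
  filter_upwards [hgood, hYM] with ω hω hωM
  set y := Y ω with hy
  have hcond : ∀ n, ((1:ℝ)/2 ≤ g (u n) ω ↔ y ≤ u n) := by
    intro n
    rw [← hω n]
    by_cases h : y ≤ u n
    · simp only [if_pos h]; norm_num [h]
    · simp only [if_neg h]; norm_num [h]
  have hge : (y : EReal) ≤ Z0 ω := by
    refine le_iInf fun n => ?_
    by_cases h : (1:ℝ)/2 ≤ g (u n) ω
    · rw [if_pos h]
      exact_mod_cast (hcond n).mp h
    · rw [if_neg h]; exact le_top
  have hle : Z0 ω ≤ (y : EReal) := by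
    by_contra hlt
    push_neg at hlt
    obtain ⟨ε, hε0, hεbound⟩ : ∃ ε > (0:ℝ), ∀ n, y ≤ u n → y + ε ≤ u n := by
      by_cases hex : ∃ n, y ≤ u n
      · obtain ⟨n₀, hn₀⟩ := hex
        have hterm : Z0 ω ≤ ((u n₀ : ℝ) : EReal) := by
          have h := iInf_le
            (fun n => if (1:ℝ)/2 ≤ g (u n) ω then ((u n : ℝ) : EReal) else ⊤) n₀
          rwa [if_pos ((hcond n₀).mpr hn₀)] at h
        have hne_top : Z0 ω ≠ ⊤ := ne_top_of_le_ne_top (EReal.coe_ne_top _) hterm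
        have hne_bot : Z0 ω ≠ ⊥ := by
          intro h
          rw [h] at hlt
          exact not_lt_bot hlt
        have hzeq : ((Z0 ω).toReal : EReal) = Z0 ω := EReal.coe_toReal hne_top hne_bot
        set z := (Z0 ω).toReal with hz
        have hyz : y < z := by
          rw [← hzeq] at hlt
          exact_mod_cast hlt
        refine ⟨z - y, by linarith, fun n hn => ?_⟩
        have h2 : Z0 ω ≤ ((u n : ℝ) : EReal) := by
          have h := iInf_le
            (fun n => if (1:ℝ)/2 ≤ g (u n) ω then ((u n : ℝ) : EReal) else ⊤) n
          rwa [if_pos ((hcond n).mpr hn)] at h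
        have h3 : z ≤ u n := by
          rw [← hzeq] at h2
          exact_mod_cast h2
        linarith
      · push_neg at hex
        exact ⟨1, one_pos, fun n hn => ((hex n).not_ge hn).elim⟩
    have hyA : ν {y} = 0 := by
      by_contra h
      have hyD : y ∈ Set.range u := hu ▸ Set.mem_union_right _ h
      obtain ⟨n, hn⟩ := hyD
      have h1 := hεbound n hn.ge
      rw [hn] at h1
      linarith
    have hIoo : ν (Set.Ioo y (y + ε)) = 0 := by
      by_contra h
      have hne : (Set.Ioo y (y + ε) ∩ Nᶜ).Nonempty := by
        rcases Set.eq_empty_or_nonempty (Set.Ioo y (y + ε) ∩ Nᶜ) with he | hne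
        · exfalso
          apply h
          refine measure_mono_null (fun x hx => ?_) hNnull
          by_contra hxN
          exact Set.eq_empty_iff_forall_notMem.mp he x ⟨hx, hxN⟩
        · exact hne
      obtain ⟨x, hxI, hxG⟩ := hne
      obtain ⟨d, hd1, hd2⟩ :=
        mem_closure_iff.mp (hGD₀ hxG) (Set.Ioo y (y + ε)) isOpen_Ioo hxI
      have hdD : d ∈ Set.range u := hu ▸ Set.mem_union_left _ hd2
      obtain ⟨n, hn⟩ := hdD
      have h1 : y ≤ u n := hn ▸ hd1.1.le
      have h2 := hεbound n h1
      rw [hn] at h2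
      linarith [hd1.2]
    exact hωM (hBM ⟨hyA, y + ε, by linarith, hIoo⟩)
  have hZ0eq : Z0 ω = (y : EReal) := le_antisymm hle hge
  show y = (Z0 ω).toReal
  rw [hZ0eq, EReal.toReal_coe]


end CvmAux

/-- The Cramér–von Mises dependence index
`ξ(X,Y) = (∫ Var[E[1_{Y≤t} | X]] dP_Y(t)) / (∫ Var[1_{Y≤t}] dP_Y(t))`. -/
noncomputable def cvmIndex {Ω α : Type*} [MeasurableSpace Ω] [MeasurableSpace α]
    (μ : Measure Ω) (X : Ω → α) (Y : Ω → ℝ) : ℝ :=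
  (∫ t, variance (μ[(fun ω => if Y ω ≤ t then (1 : ℝ) else 0) |
      MeasurableSpace.comap X inferInstance]) μ ∂(μ.map Y)) /
  (∫ t, variance (fun ω => if Y ω ≤ t then (1 : ℝ) else 0) μ ∂(μ.map Y))


/-- if `ξ(X,Y) = 1` then `Y` is almost surely equal to a
`σ(X)`-measurable random variable. -/
theorem ae_eq_sigma_measurable_of_cvmIndex_eq_one {Ω α : Type*} [MeasurableSpace Ω]
    [MeasurableSpace α]
    (μ : Measure Ω) [IsProbabilityMeasure μ] (X : Ω → α) (Y : Ω → ℝ)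
    (hX : Measurable X) (hY : Measurable Y)
    (hden : 0 < ∫ t, variance (fun ω => if Y ω ≤ t then (1 : ℝ) else 0) μ ∂(μ.map Y))
    (hxi : cvmIndex μ X Y = 1) :
    ∃ Z : Ω → ℝ, Measurable[MeasurableSpace.comap X inferInstance] Z ∧ Y =ᵐ[μ] Z := by
  have hm' : MeasurableSpace.comap X inferInstance ≤ (inferInstance : MeasurableSpace Ω) :=
    measurable_iff_comap_le.mp hX
  have hmeas : ∀ t, Measurable (fun ω => if Y ω ≤ t then (1 : ℝ) else 0) := fun t =>
    Measurable.ite (measurableSet_le hY measurable_const) measurable_const measurable_const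
  have hbd : ∀ t ω, ‖(if Y ω ≤ t then (1 : ℝ) else 0)‖ ≤ 1 := by
    intro t ω; split_ifs <;> simp
  have hiden : ∀ t, variance (fun ω => if Y ω ≤ t then (1 : ℝ) else 0) μ
      - variance (μ[(fun ω => if Y ω ≤ t then (1 : ℝ) else 0) |
        MeasurableSpace.comap X inferInstance]) μ
      = ∫ ω, ((if Y ω ≤ t then (1 : ℝ) else 0)
        - (μ[(fun ω => if Y ω ≤ t then (1 : ℝ) else 0) |
          MeasurableSpace.comap X inferInstance]) ω) ^ 2 ∂μ := fun t =>
    cvm_var_condexp_sub _ μ hm' _ (hmeas t) (hbd t)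
  have hle : ∀ t, variance (μ[(fun ω => if Y ω ≤ t then (1 : ℝ) else 0) |
      MeasurableSpace.comap X inferInstance]) μ
      ≤ variance (fun ω => if Y ω ≤ t then (1 : ℝ) else 0) μ := by
    intro t
    have h1 := hiden t
    have h2 : 0 ≤ ∫ ω, ((if Y ω ≤ t then (1 : ℝ) else 0)
        - (μ[(fun ω => if Y ω ≤ t then (1 : ℝ) else 0) |
          MeasurableSpace.comap X inferInstance]) ω) ^ 2 ∂μ :=
      integral_nonneg fun ω => sq_nonneg _
    linarith
  have hnum : (∫ t, variance (μ[(fun ω => if Y ω ≤ t then (1 : ℝ) else 0) |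
      MeasurableSpace.comap X inferInstance]) μ ∂(μ.map Y))
      = ∫ t, variance (fun ω => if Y ω ≤ t then (1 : ℝ) else 0) μ ∂(μ.map Y) := by
    unfold cvmIndex at hxi
    rwa [div_eq_one_iff_eq hden.ne'] at hxi
  have hIf : Integrable
      (fun t => variance (fun ω => if Y ω ≤ t then (1 : ℝ) else 0) μ) (μ.map Y) := by
    by_contra h
    rw [integral_undef h] at hden
    exact lt_irrefl 0 hden
  have hIg : Integrable (fun t => variance (μ[(fun ω => if Y ω ≤ t then (1 : ℝ) else 0) |
      MeasurableSpace.comap X inferInstance]) μ) (μ.map Y) := by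
    by_contra h
    rw [integral_undef h] at hnum
    exact hden.ne' hnum.symm
  have hzero : ∀ᵐ t ∂(μ.map Y),
      variance (fun ω => if Y ω ≤ t then (1 : ℝ) else 0) μ
      - variance (μ[(fun ω => if Y ω ≤ t then (1 : ℝ) else 0) |
        MeasurableSpace.comap X inferInstance]) μ = 0 := by
    have hint := hIf.sub hIg
    have h0 : ∫ t, (variance (fun ω => if Y ω ≤ t then (1 : ℝ) else 0) μ
        - variance (μ[(fun ω => if Y ω ≤ t then (1 : ℝ) else 0) |
          MeasurableSpace.comap X inferInstance]) μ) ∂(μ.map Y) = 0 := by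
      rw [integral_sub hIf hIg, hnum, sub_self]
    have h1 := (integral_eq_zero_iff_of_nonneg
      (fun t => sub_nonneg.mpr (hle t)) hint).mp h0
    filter_upwards [h1] with t ht using ht
  have hae : ∀ᵐ t ∂(μ.map Y), (fun ω => if Y ω ≤ t then (1:ℝ) else 0)
      =ᵐ[μ] μ[(fun ω => if Y ω ≤ t then (1 : ℝ) else 0) |
        MeasurableSpace.comap X inferInstance] := by
    filter_upwards [hzero] with t ht
    have h2 : ∫ ω, ((if Y ω ≤ t then (1 : ℝ) else 0)
        - (μ[(fun ω => if Y ω ≤ t then (1 : ℝ) else 0) |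
          MeasurableSpace.comap X inferInstance]) ω) ^ 2 ∂μ = 0 := by
      rw [← hiden t]; exact ht
    have hf2 : MemLp (fun ω => if Y ω ≤ t then (1 : ℝ) else 0) 2 μ :=
      MemLp.of_bound (hmeas t).aestronglyMeasurable 1 (ae_of_all _ (hbd t))
    have hg2 : MemLp (μ[(fun ω => if Y ω ≤ t then (1 : ℝ) else 0) |
        MeasurableSpace.comap X inferInstance]) 2 μ :=
      MemLp.of_bound ((stronglyMeasurable_condExp.mono hm').aestronglyMeasurable) 1
        (cvm_condexp_bound _ μ hm' (hf2.integrable one_le_two) (hbd t))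
    have hint : Integrable (fun ω => ((if Y ω ≤ t then (1 : ℝ) else 0)
        - (μ[(fun ω => if Y ω ≤ t then (1 : ℝ) else 0) |
          MeasurableSpace.comap X inferInstance]) ω) ^ 2) μ := by
      simpa [Pi.sub_apply] using (hf2.sub hg2).integrable_sq
    have h3 := (integral_eq_zero_iff_of_nonneg (fun ω => sq_nonneg _) hint).mp h2
    filter_upwards [h3] with ω hω
    have h4 : ((if Y ω ≤ t then (1 : ℝ) else 0)
        - (μ[(fun ω => if Y ω ≤ t then (1 : ℝ) else 0) |
          MeasurableSpace.comap X inferInstance]) ω) ^ 2 = 0 := hω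
    have h5 := pow_eq_zero_iff (two_ne_zero) |>.mp h4
    exact sub_eq_zero.mp h5
  exact cvm_exists_meas_of_ae_indicator _ μ Y hY _ (fun t => stronglyMeasurable_condExp) hae
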